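/- Let β ∈ (0,2), v ∈ C([0,1], L(ℝ^d,ℝ^n)) and w ∈ C^β(ℝ^d) (Schauder-Hölder space). Then the paraproduct π_<(v,w) := Σ_{p≥0} S_{p−1}v · Δ_p w belongs to C^β(ℝ^n) and ‖π_<(v,w)‖_β ≲ ‖v‖_∞ ‖w‖_β. -/

import Mathlib

noncomputable section
open MeasureTheory Set

namespace Sch

/-- dyadic point `t⁰_{pm} = (m-1)/2^p`. -/
def pt0 (p m : ℕ) : ℝ := ((m : ℝ) - 1) / 2 ^ p
/-- dyadic point `t¹_{pm} = (2m-1)/2^{p+1}`. -/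
def pt1 (p m : ℕ) : ℝ := (2 * (m : ℝ) - 1) / 2 ^ (p + 1)
/-- dyadic point `t²_{pm} = m/2^p`. -/
def pt2 (p m : ℕ) : ℝ := (m : ℝ) / 2 ^ p

/-- The rescaled Haar function `χ_{pm} = 2^{p/2} H_{pm}`, with the conventions
`χ_{00} = 1` on `[0,1)` (derivative of `φ_{00}(t) = t`) and `χ_{p0} ≡ 0` for `p ≥ 1`. -/
def chi (p m : ℕ) (t : ℝ) : ℝ :=
  if m = 0 then (if p = 0 ∧ 0 ≤ t ∧ t < 1 then 1 else 0)
  else if pt0 p m ≤ t ∧ t < pt1 p m then (2 : ℝ) ^ p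
  else if pt1 p m ≤ t ∧ t < pt2 p m then -(2 : ℝ) ^ p
  else 0

/-- The rescaled Schauder tent function `φ_{pm} = 2^{p/2} G_{pm} = ∫_0^· χ_{pm}`. -/
def phi (p m : ℕ) (t : ℝ) : ℝ := ∫ s in (0:ℝ)..t, chi p m s

variable {E F G : Type*} [NormedAddCommGroup E] [NormedSpace ℝ E]
  [NormedAddCommGroup F] [NormedSpace ℝ F] [NormedAddCommGroup G] [NormedSpace ℝ G]

/-- The (rescaled) Schauder coefficient `f_{pm} = 2f(t¹_{pm}) - f(t⁰_{pm}) - f(t²_{pm})`,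
with the conventions `f_{00} = f(1) - f(0)` and `f_{p0} = 0` for `p ≥ 1`. -/
def coeff (f : ℝ → E) (p m : ℕ) : E :=
  if m = 0 then (if p = 0 then f 1 - f 0 else 0)
  else f (pt1 p m) + f (pt1 p m) - f (pt0 p m) - f (pt2 p m)

/-- Shifted Schauder blocks: `block f 0 = Δ_{-1} f ≡ f(0)` and `block f (p+1) = Δ_p f`. -/
def block (f : ℝ → E) : ℕ → ℝ → E
  | 0 => fun _ => f 0
  | (p + 1) => fun t => ∑ m ∈ Finset.range (2 ^ p + 1), phi p m t • coeff f p m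

/-- Partial sum `psum f p = S_{p-1} f` (blocks of generations `-1, 0, …, p-1`),
the piecewise linear interpolation of `f` on the dyadic grid of generation `p`. -/
def psum (f : ℝ → E) (p : ℕ) (t : ℝ) : E := ∑ k ∈ Finset.range (p + 1), block f k t

/-- Derivative of the shifted Schauder block. -/
def dblock (f : ℝ → E) : ℕ → ℝ → E
  | 0 => fun _ => 0
  | (p + 1) => fun t => ∑ m ∈ Finset.range (2 ^ p + 1), chi p m t • coeff f p m

/-- Derivative of `psum f p = S_{p-1} f`. -/
def dpsum (f : ℝ → E) (p : ℕ) (t : ℝ) : E := ∑ k ∈ Finset.range (p + 1), dblock f k t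

/-- `CoeffBound γ f K` expresses `‖f‖_γ = sup_{p,m} 2^{pγ} |f_{pm}| ≤ K`
(including the generation-(-1) coefficient `f_{-1,0} = f(0)`). -/
def CoeffBound (γ : ℝ) (f : ℝ → E) (K : ℝ) : Prop :=
  (2 : ℝ) ^ (-γ) * ‖f 0‖ ≤ K ∧
  ∀ p m : ℕ, m ≤ 2 ^ p → (2 : ℝ) ^ (γ * (p : ℝ)) * ‖coeff f p m‖ ≤ K

/-- The Schauder paraproduct `π_<(v,w) = ∑_{p≥0} S_{p-1}v · Δ_p w`. -/
def para (v : ℝ → (E →L[ℝ] F)) (w : ℝ → E) (t : ℝ) : F :=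
  ∑' p : ℕ, (psum v p t) (block w (p + 1) t)

/-- The `p`-th term of the Lévy area: `∫_0^t Δ_p v dS_{p-1}w - ∫_0^t d(S_{p-1}v) Δ_p w`. -/
def leviTerm (v : ℝ → (E →L[ℝ] F)) (w : ℝ → E) (p : ℕ) (t : ℝ) : F :=
  ∫ s in (0:ℝ)..t, ((block v (p + 1) s) (dpsum w p s) - (dpsum v p s) (block w (p + 1) s))

/-- The Lévy area `L(v,w) = ∑_p (∫ Δ_p v dS_{p-1}w - ∫ d(S_{p-1}v) Δ_p w)`. -/
def levi (v : ℝ → (E →L[ℝ] F)) (w : ℝ → E) (t : ℝ) : F := ∑' p : ℕ, leviTerm v w p t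

/-- The symmetric part
`S(v,w) = ∑_{m,n≤1} v_{0m}w_{0n} ∫_0^· φ_{0m} dφ_{0n} + (1/2) ∑_{p≥1} Δ_p v Δ_p w`. -/
def symPart (v : ℝ → (E →L[ℝ] F)) (w : ℝ → E) (t : ℝ) : F :=
  (∑ m ∈ Finset.range 2, ∑ n ∈ Finset.range 2,
      (∫ s in (0:ℝ)..t, phi 0 m s * chi 0 n s) • ((coeff v 0 m) (coeff w 0 n)))
    + (1 / 2 : ℝ) • ∑' p : ℕ, (block v (p + 2) t) (block w (p + 2) t)

/-- The Young integral `I(v, dw) = L(v,w) + S(v,w) + π_<(v,w)`. -/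
def young (v : ℝ → (E →L[ℝ] F)) (w : ℝ → E) (t : ℝ) : F :=
  levi v w t + symPart v w t + para v w t

end Sch

namespace Sch
open MeasureTheory Set
variable {E F G : Type*} [NormedAddCommGroup E] [NormedSpace ℝ E]
  [NormedAddCommGroup F] [NormedSpace ℝ F] [NormedAddCommGroup G] [NormedSpace ℝ G]

lemma integral_ind (a b t : ℝ) (h0 : 0 ≤ a) (hab : a ≤ b) :
    ∫ s in (0:ℝ)..t, (Ico a b).indicator (fun _ => (1:ℝ)) s = min t b - min t a := by
  have hb : 0 ≤ b := h0.trans hab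
  have hico : ∀ x y : ℝ, ∫ s in Ioc x y, (Ico a b).indicator (fun _ => (1:ℝ)) s
      = max (min y b - max x a) 0 := by
    intro x y
    rw [setIntegral_indicator measurableSet_Ico]
    have hae : (Ioc x y ∩ Ico a b : Set ℝ) =ᵐ[volume] (Ioc x y ∩ Ioc a b : Set ℝ) :=
      (Filter.EventuallyEq.refl _ _).inter (Ioo_ae_eq_Ico.symm.trans Ioo_ae_eq_Ioc)
    rw [setIntegral_const, measureReal_congr hae, Ioc_inter_Ioc, Real.volume_real_Ioc,
      smul_eq_mul, mul_one]
  rcases le_total 0 t with ht | ht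
  · rw [intervalIntegral.integral_of_le ht, hico, max_eq_right h0]
    rcases le_total t a with hta | hta
    · rw [min_eq_left (hta.trans hab), min_eq_left hta, sub_self, max_eq_right_iff.2 (by linarith)]
    · rw [min_eq_right hta, max_eq_left]
      have : a ≤ min t b := le_min hta hab
      linarith
  · rw [intervalIntegral.integral_of_ge ht, hico]
    rw [min_eq_left hb, max_eq_right (ht.trans h0), min_eq_left (ht.trans hb),
      min_eq_left (ht.trans h0), sub_self, neg_eq_zero, max_eq_right_iff.2 (by linarith)]

lemma ind_integrable (a b : ℝ) : Integrable ((Ico a b).indicator (fun _ => (1:ℝ))) volume := by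
  rw [integrable_indicator_iff measurableSet_Ico]
  exact integrableOn_const (by rw [Real.volume_Ico]; exact ENNReal.ofReal_ne_top)

lemma pt1_sub_pt0 (p m : ℕ) : pt1 p m - pt0 p m = 1 / 2 ^ (p + 1) := by
  simp only [pt0, pt1]; field_simp; ring

lemma pt2_sub_pt1 (p m : ℕ) : pt2 p m - pt1 p m = 1 / 2 ^ (p + 1) := by
  simp only [pt1, pt2]; field_simp; ring

lemma pt0_lt_pt1 (p m : ℕ) : pt0 p m < pt1 p m := by
  have : (0:ℝ) < 1 / 2 ^ (p+1) := by positivity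
  linarith [pt1_sub_pt0 p m]

lemma pt1_lt_pt2 (p m : ℕ) : pt1 p m < pt2 p m := by
  have : (0:ℝ) < 1 / 2 ^ (p+1) := by positivity
  linarith [pt2_sub_pt1 p m]

lemma pt0_nonneg (p m : ℕ) (hm : m ≠ 0) : 0 ≤ pt0 p m := by
  have : (1:ℝ) ≤ m := by exact_mod_cast Nat.one_le_iff_ne_zero.2 hm
  exact div_nonneg (by linarith) (by positivity)

lemma pt_midpoint (p m : ℕ) : pt0 p m + pt2 p m = 2 * pt1 p m := by
  simp only [pt0, pt1, pt2]; field_simp; ring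

lemma chi_eq (p m : ℕ) (hm : m ≠ 0) : chi p m = fun s =>
    (2:ℝ)^p * (Ico (pt0 p m) (pt1 p m)).indicator (fun _ => (1:ℝ)) s
    - (2:ℝ)^p * (Ico (pt1 p m) (pt2 p m)).indicator (fun _ => (1:ℝ)) s := by
  funext s
  simp only [chi, if_neg hm, Set.indicator_apply, mem_Ico]
  by_cases h1 : pt0 p m ≤ s ∧ s < pt1 p m
  · have h2 : ¬(pt1 p m ≤ s ∧ s < pt2 p m) := fun h => absurd h1.2 (not_lt.2 h.1)
    simp [h1, h2]
  · by_cases h2 : pt1 p m ≤ s ∧ s < pt2 p m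
    · simp [h1, h2]
    · simp [h1, h2]

lemma phi_eq (p m : ℕ) (hm : m ≠ 0) (t : ℝ) :
    phi p m t = 2^p * (2 * min t (pt1 p m) - min t (pt0 p m) - min t (pt2 p m)) := by
  have h0 : 0 ≤ pt0 p m := pt0_nonneg p m hm
  have h01 : pt0 p m ≤ pt1 p m := (pt0_lt_pt1 p m).le
  have h12 : pt1 p m ≤ pt2 p m := (pt1_lt_pt2 p m).le
  unfold phi
  rw [chi_eq p m hm]
  rw [intervalIntegral.integral_sub (((ind_integrable _ _).const_mul _).intervalIntegrable)
    (((ind_integrable _ _).const_mul _).intervalIntegrable),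
    intervalIntegral.integral_const_mul, intervalIntegral.integral_const_mul,
    integral_ind _ _ _ h0 h01, integral_ind _ _ _ (h0.trans h01) h12]
  ring

lemma phi_p0 (p : ℕ) (hp : p ≠ 0) (t : ℝ) : phi p 0 t = 0 := by
  have : chi p 0 = fun _ => (0:ℝ) := by
    funext s; simp [chi, hp]
  simp [phi, this]

lemma phi_00 (t : ℝ) : phi 0 0 t = min t 1 - min t 0 := by
  have : chi 0 0 = fun s => (Ico (0:ℝ) 1).indicator (fun _ => (1:ℝ)) s := by
    funext s; simp [chi, Set.indicator_apply, mem_Ico]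
  rw [phi, this, integral_ind 0 1 t le_rfl zero_le_one]

lemma phi_00_mem (t : ℝ) : 0 ≤ phi 0 0 t ∧ phi 0 0 t ≤ 1 := by
  rw [phi_00]
  rcases le_total t 0 with h | h
  · rw [min_eq_left (h.trans zero_le_one), min_eq_left h]; norm_num
  · rw [min_eq_right h]
    rcases le_total t 1 with h1 | h1
    · rw [min_eq_left h1]; constructor <;> linarith
    · rw [min_eq_right h1]; constructor <;> linarith

lemma phi_nonneg (p m : ℕ) (t : ℝ) : 0 ≤ phi p m t := by
  rcases eq_or_ne m 0 with rfl | hm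
  · rcases eq_or_ne p 0 with rfl | hp
    · exact (phi_00_mem t).1
    · rw [phi_p0 p hp]
  · rw [phi_eq p m hm]
    have h01 := pt0_lt_pt1 p m
    have h12 := pt1_lt_pt2 p m
    have hmid := pt_midpoint p m
    have : 0 ≤ 2 * min t (pt1 p m) - min t (pt0 p m) - min t (pt2 p m) := by
      rcases le_total t (pt0 p m) with h | h
      · rw [min_eq_left h, min_eq_left (h.trans h01.le), min_eq_left (h.trans (h01.trans h12).le)]
        ring_nf; linarith
      rcases le_total t (pt1 p m) with h1 | h1
      · rw [min_eq_left h1, min_eq_right h, min_eq_left (h1.trans h12.le)]; linarith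
      · rw [min_eq_right h1, min_eq_right h, sub_sub]
        have : min t (pt2 p m) ≤ pt2 p m := min_le_right _ _
        linarith
    positivity

lemma phi_le_half (p m : ℕ) (hm : m ≠ 0) (t : ℝ) : phi p m t ≤ 1 / 2 := by
  rw [phi_eq p m hm]
  have h01 := pt0_lt_pt1 p m
  have h12 := pt1_lt_pt2 p m
  have hd := pt1_sub_pt0 p m
  have key : 2 * min t (pt1 p m) - min t (pt0 p m) - min t (pt2 p m) ≤ 1 / 2^(p+1) := by
    rcases le_total t (pt1 p m) with h | h
    · rw [min_eq_left h, min_eq_left (h.trans h12.le)]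
      have : min t (pt0 p m) ≥ t - (pt1 p m - pt0 p m) := by
        rcases le_total t (pt0 p m) with h' | h'
        · rw [min_eq_left h']; linarith
        · rw [min_eq_right h']; linarith
      linarith
    · rw [min_eq_right h, min_eq_right (h01.le.trans h)]
      have : pt1 p m ≤ min t (pt2 p m) := le_min h h12.le
      linarith
  calc (2:ℝ)^p * (2 * min t (pt1 p m) - min t (pt0 p m) - min t (pt2 p m))
      ≤ 2^p * (1/2^(p+1)) := by
        have : (0:ℝ) < 2^p := by positivity
        nlinarith
    _ = 1/2 := by rw [pow_succ]; field_simp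

lemma phi_zero_of_le (p m : ℕ) (hm : m ≠ 0) {t : ℝ} (h : t ≤ pt0 p m) : phi p m t = 0 := by
  rw [phi_eq p m hm, min_eq_left (h.trans (pt0_lt_pt1 p m).le), min_eq_left h,
    min_eq_left (h.trans ((pt0_lt_pt1 p m).trans (pt1_lt_pt2 p m)).le)]
  ring

lemma phi_zero_of_ge (p m : ℕ) (hm : m ≠ 0) {t : ℝ} (h : pt2 p m ≤ t) : phi p m t = 0 := by
  rw [phi_eq p m hm, min_eq_right ((pt1_lt_pt2 p m).le.trans h), min_eq_right
    (((pt0_lt_pt1 p m).trans (pt1_lt_pt2 p m)).le.trans h), min_eq_right h]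
  have h0 : 2 * pt1 p m - pt0 p m - pt2 p m = 0 := by linarith [pt_midpoint p m]
  rw [h0, mul_zero]

lemma mins3 (x t0 t1 t2 : ℝ) (h : x ≤ t0 ∨ t2 ≤ x) (h01 : t0 ≤ t1) (h12 : t1 ≤ t2)
    (hmid : t0 + t2 = 2 * t1) : 2 * min t1 x - min t0 x - min t2 x = 0 := by
  rcases h with h | h
  · rw [min_eq_right (h.trans h01), min_eq_right h, min_eq_right (h.trans (h01.trans h12))]
    ring
  · rw [min_eq_left (h12.trans h), min_eq_left ((h01.trans h12).trans h), min_eq_left h]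
    linarith

lemma sep (p q i m : ℕ) (hq : q < p) (hm : m ≠ 0) :
    ((i:ℝ)/2^(q+1) ≤ pt0 p m) ∨ (pt2 p m ≤ (i:ℝ)/2^(q+1)) := by
  obtain ⟨d, rfl⟩ : ∃ d, p = q + 1 + d := ⟨p - q - 1, by omega⟩
  have hm1 : (1:ℝ) ≤ m := by exact_mod_cast Nat.one_le_iff_ne_zero.2 hm
  rcases le_or_gt (i * 2^d) (m-1) with h | h
  · left
    rw [pt0, div_le_div_iff₀ (by positivity) (by positivity)]
    have h' : ((i:ℝ) * 2^d) ≤ (m:ℝ) - 1 := by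
      have := (Nat.cast_le (α := ℝ)).2 h
      rw [Nat.cast_sub (Nat.one_le_iff_ne_zero.2 hm)] at this
      push_cast at this; linarith
    calc (i:ℝ) * 2^(q+1+d) = ((i:ℝ) * 2^d) * 2^(q+1) := by rw [pow_add]; ring
      _ ≤ ((m:ℝ) - 1) * 2^(q+1) := mul_le_mul_of_nonneg_right h' (by positivity)
  · right
    rw [pt2, div_le_div_iff₀ (by positivity) (by positivity)]
    have h' : (m:ℝ) ≤ (i:ℝ) * 2^d := by
      have : m ≤ i * 2^d := by omega
      exact_mod_cast this
    calc (m:ℝ) * 2^(q+1) ≤ ((i:ℝ) * 2^d) * 2^(q+1) :=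
          mul_le_mul_of_nonneg_right h' (by positivity)
      _ = (i:ℝ) * 2^(q+1+d) := by rw [pow_add]; ring

lemma phi_at_pt1 (p m : ℕ) (hm : m ≠ 0) : phi p m (pt1 p m) = 1 / 2 := by
  rw [phi_eq p m hm, min_self, min_eq_right (pt0_lt_pt1 p m).le,
    min_eq_left (pt1_lt_pt2 p m).le]
  have h := pt1_sub_pt0 p m
  have hps : (2:ℝ)^(p+1) = 2^p * 2 := by rw [pow_succ]
  have h2 : (2:ℝ)^p ≠ 0 := by positivity
  field_simp [hps] at h ⊢
  linear_combination h

lemma phi_sdz (q m' : ℕ) (hm' : m' ≠ 0) {t0 t1 t2 : ℝ}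
    (Ma : 2 * min t1 (pt0 q m') - min t0 (pt0 q m') - min t2 (pt0 q m') = 0)
    (Mb : 2 * min t1 (pt1 q m') - min t0 (pt1 q m') - min t2 (pt1 q m') = 0)
    (Mc : 2 * min t1 (pt2 q m') - min t0 (pt2 q m') - min t2 (pt2 q m') = 0) :
    2 * phi q m' t1 - phi q m' t0 - phi q m' t2 = 0 := by
  rw [phi_eq q m' hm', phi_eq q m' hm', phi_eq q m' hm']
  linear_combination (2:ℝ)^q * (2 * Mb - Ma - Mc)

lemma phi_second_diff (p q m m' : ℕ) (hm : m ≠ 0) (hm2 : m ≤ 2^p) (hq : q ≤ p) :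
    2 * phi q m' (pt1 p m) - phi q m' (pt0 p m) - phi q m' (pt2 p m)
      = if q = p ∧ m' = m then 1 else 0 := by
  have h01 : pt0 p m ≤ pt1 p m := (pt0_lt_pt1 p m).le
  have h12 : pt1 p m ≤ pt2 p m := (pt1_lt_pt2 p m).le
  have hmid : pt0 p m + pt2 p m = 2 * pt1 p m := pt_midpoint p m
  have key : ∀ x : ℝ, (x ≤ pt0 p m ∨ pt2 p m ≤ x) →
      2 * min (pt1 p m) x - min (pt0 p m) x - min (pt2 p m) x = 0 := fun x h =>
    mins3 x _ _ _ h h01 h12 hmid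
  rcases eq_or_ne m' 0 with rfl | hm'
  · rw [if_neg (fun h => hm (h.2.symm))]
    rcases eq_or_ne q 0 with rfl | hq0
    · rw [phi_00, phi_00, phi_00]
      have e1 : 2 * min (pt1 p m) 1 - min (pt0 p m) 1 - min (pt2 p m) 1 = 0 := by
        refine key 1 (Or.inr ?_)
        rw [pt2, div_le_one (by positivity)]
        exact_mod_cast hm2
      have e0 : 2 * min (pt1 p m) 0 - min (pt0 p m) 0 - min (pt2 p m) 0 = 0 :=
        key 0 (Or.inl (pt0_nonneg p m hm))
      linarith
    · rw [phi_p0 q hq0, phi_p0 q hq0, phi_p0 q hq0]; ring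
  · rcases lt_trichotomy q p with hqp | hqp | hqp
    · rw [if_neg (fun h => absurd h.1 hqp.ne)]
      have cast0 : pt0 q m' = ((2*m'-2 : ℕ):ℝ)/2^(q+1) := by
        rw [pt0]
        have h2 : ((2*m'-2 : ℕ):ℝ) = 2*(m':ℝ) - 2 := by
          have : 2 ≤ 2 * m' := by omega
          push_cast [Nat.cast_sub this]; ring
        rw [h2, pow_succ]
        field_simp
      have cast1 : pt1 q m' = ((2*m'-1 : ℕ):ℝ)/2^(q+1) := by
        rw [pt1]
        have h2 : ((2*m'-1 : ℕ):ℝ) = 2*(m':ℝ) - 1 := by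
          have : 1 ≤ 2 * m' := by omega
          push_cast [Nat.cast_sub this]; ring
        rw [h2]
      have cast2 : pt2 q m' = ((2*m' : ℕ):ℝ)/2^(q+1) := by
        rw [pt2, pow_succ]; push_cast; field_simp
      exact phi_sdz q m' hm' (key _ (cast0 ▸ sep p q (2*m'-2) m hqp hm))
        (key _ (cast1 ▸ sep p q (2*m'-1) m hqp hm))
        (key _ (cast2 ▸ sep p q (2*m') m hqp hm))
    · subst hqp
      rcases lt_trichotomy m' m with hmm | rfl | hmm
      · rw [if_neg (fun h => absurd h.2 hmm.ne)]
        have hc : pt2 q m' ≤ pt0 q m := by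
          rw [pt2, pt0, div_le_div_iff₀ (by positivity) (by positivity)]
          have h' : (m':ℝ) ≤ (m:ℝ) - 1 := by
            have : (m' : ℝ) + 1 ≤ m := by exact_mod_cast hmm
            linarith
          nlinarith [pow_pos (by norm_num : (0:ℝ) < 2) q]
        exact phi_sdz q m' hm'
          (key _ (Or.inl ((((pt0_lt_pt1 q m').trans (pt1_lt_pt2 q m')).le).trans hc)))
          (key _ (Or.inl (((pt1_lt_pt2 q m').le).trans hc)))
          (key _ (Or.inl hc))
      · rw [if_pos ⟨rfl, rfl⟩, phi_at_pt1 q m' hm',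
          phi_zero_of_le q m' hm' le_rfl, phi_zero_of_ge q m' hm' le_rfl]
        norm_num
      · rw [if_neg (fun h => absurd h.2 hmm.ne')]
        have hge : pt2 q m ≤ pt0 q m' := by
          rw [pt2, pt0, div_le_div_iff₀ (by positivity) (by positivity)]
          have h' : (m:ℝ) ≤ (m':ℝ) - 1 := by
            have : (m : ℝ) + 1 ≤ m' := by exact_mod_cast hmm
            linarith
          nlinarith [pow_pos (by norm_num : (0:ℝ) < 2) q]
        exact phi_sdz q m' hm' (key _ (Or.inr hge))
          (key _ (Or.inr (hge.trans (pt0_lt_pt1 q m').le)))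
          (key _ (Or.inr (hge.trans ((pt0_lt_pt1 q m').trans (pt1_lt_pt2 q m')).le)))
    · exact absurd hqp (not_lt.2 hq)

lemma phi_grid (q m j : ℕ) (hm : m ≠ 0) : phi q m ((j:ℝ)/2^q) = 0 := by
  rcases le_or_gt m j with h | h
  · refine phi_zero_of_ge q m hm ?_
    rw [pt2]
    gcongr
  · refine phi_zero_of_le q m hm ?_
    rw [pt0]
    gcongr
    have : (j:ℝ) + 1 ≤ m := by exact_mod_cast h
    linarith

lemma sum_support_le {N : ℕ} (f : ℕ → ℝ) (C : ℝ) (hC : 0 ≤ C) (h0 : ∀ i, 0 ≤ f i)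
    (hle : ∀ i, i < N → f i ≤ C)
    (hdisj : ∀ i j, i < j → j < N → f i = 0 ∨ f j = 0) :
    ∑ i ∈ Finset.range N, f i ≤ C := by
  by_cases hex : ∃ i ∈ Finset.range N, f i ≠ 0
  · obtain ⟨i0, hi0, hne⟩ := hex
    rw [Finset.sum_eq_single_of_mem i0 hi0 (fun j hj hji => ?_)]
    · exact hle i0 (Finset.mem_range.1 hi0)
    · rcases lt_or_gt_of_ne hji with h | h
      · rcases hdisj j i0 h (Finset.mem_range.1 hi0) with h' | h'
        · exact h'
        · exact absurd h' hne
      · rcases hdisj i0 j h (Finset.mem_range.1 hj) with h' | h'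
        · exact absurd h' hne
        · exact h'
  · push_neg at hex
    rw [Finset.sum_eq_zero hex]
    exact hC

lemma chi_abs_le (p m : ℕ) (s : ℝ) : |chi p m s| ≤ 2^p := by
  unfold chi
  split_ifs
  · rw [abs_one]; exact one_le_pow₀ one_le_two
  · rw [abs_zero]; positivity
  · rw [abs_of_nonneg (by positivity : (0:ℝ) ≤ 2^p)]
  · rw [abs_neg, abs_of_nonneg (by positivity : (0:ℝ) ≤ 2^p)]
  · rw [abs_zero]; positivity

lemma chi_ne_zero (p m : ℕ) (hm : m ≠ 0) {s : ℝ} (h : chi p m s ≠ 0) :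
    pt0 p m ≤ s ∧ s < pt2 p m := by
  unfold chi at h
  rw [if_neg hm] at h
  split_ifs at h with h1 h2
  · exact ⟨h1.1, h1.2.trans (pt1_lt_pt2 p m)⟩
  · exact ⟨(pt0_lt_pt1 p m).le.trans h2.1, h2.2⟩
  · exact absurd rfl h

lemma phi_ne_zero (p m : ℕ) (hm : m ≠ 0) {s : ℝ} (h : phi p m s ≠ 0) :
    pt0 p m < s ∧ s < pt2 p m := by
  constructor
  · by_contra h'
    exact h (phi_zero_of_le p m hm (not_lt.1 h'))
  · by_contra h'
    exact h (phi_zero_of_ge p m hm (not_lt.1 h'))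

lemma pt2_le_pt0 (q i j : ℕ) (hij : i < j) : pt2 q (i+1) ≤ pt0 q (j+1) := by
  rw [pt2, pt0]
  gcongr
  push_cast
  have : (i:ℝ) + 1 ≤ j := by exact_mod_cast hij
  linarith

lemma coeff_zero_zero (w : ℝ → E) : coeff w 0 0 = w 1 - w 0 := by simp [coeff]

lemma block_bound (w : ℝ → E) (q : ℕ) (K : ℝ) (hK : 0 ≤ K)
    (hc : ∀ m, m ≤ 2^q → ‖coeff w q m‖ ≤ K) (t : ℝ) :
    ‖block w (q+1) t‖ ≤ 2 * K := by
  show ‖∑ m ∈ Finset.range (2 ^ q + 1), phi q m t • coeff w q m‖ ≤ 2 * K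
  refine (norm_sum_le _ _).trans ?_
  rw [Finset.sum_range_succ']
  have mm : ∀ (x : ℝ) (e : E), 0 ≤ x → x ≤ 1 → ‖e‖ ≤ K → ‖x • e‖ ≤ K := by
    intro x e hx h1 he
    rw [norm_smul, Real.norm_eq_abs, abs_of_nonneg hx]
    nlinarith [norm_nonneg e]
  have h0 : ‖phi q 0 t • coeff w q 0‖ ≤ K := by
    rcases eq_or_ne q 0 with rfl | hq
    · exact mm _ _ (phi_00_mem t).1 (phi_00_mem t).2 (hc 0 (by norm_num))
    · rw [phi_p0 q hq]; simpa using hK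
  have h1 : ∑ i ∈ Finset.range (2 ^ q), ‖phi q (i+1) t • coeff w q (i+1)‖ ≤ K := by
    refine sum_support_le _ K hK (fun i => norm_nonneg _) (fun i hi => ?_) (fun i j hij hj => ?_)
    · exact mm _ _ (phi_nonneg _ _ _) ((phi_le_half q (i+1) (Nat.succ_ne_zero i) t).trans
        (by norm_num)) (hc (i+1) (by omega))
    · by_cases hzi : phi q (i+1) t = 0
      · left; simp [hzi]
      · right
        have hi' := phi_ne_zero q (i+1) (Nat.succ_ne_zero i) hzi
        have : pt2 q (i+1) ≤ pt0 q (j+1) := pt2_le_pt0 q i j hij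
        have : phi q (j+1) t = 0 :=
          phi_zero_of_le q (j+1) (Nat.succ_ne_zero j) (le_of_lt (lt_of_lt_of_le hi'.2 this))
        simp [this]
  linarith

lemma chi_integrable (p m : ℕ) : Integrable (chi p m) volume := by
  rcases eq_or_ne m 0 with rfl | hm
  · rcases eq_or_ne p 0 with rfl | hp
    · have : chi 0 0 = fun s => (Ico (0:ℝ) 1).indicator (fun _ => (1:ℝ)) s := by
        funext s; simp [chi, Set.indicator_apply, mem_Ico]
      rw [this]; exact ind_integrable 0 1
    · have : chi p 0 = fun _ => (0:ℝ) := by funext s; simp [chi, hp]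
      rw [this]; exact integrable_zero _ _ _
  · rw [chi_eq p m hm]
    exact ((ind_integrable _ _).const_mul _).sub ((ind_integrable _ _).const_mul _)

lemma block_sub_eq [CompleteSpace E] (w : ℝ → E) (q : ℕ) (x y : ℝ) :
    block w (q+1) y - block w (q+1) x = ∫ s in x..y, dblock w (q+1) s := by
  show (∑ m ∈ Finset.range (2 ^ q + 1), phi q m y • coeff w q m)
      - (∑ m ∈ Finset.range (2 ^ q + 1), phi q m x • coeff w q m)
      = ∫ s in x..y, ∑ m ∈ Finset.range (2 ^ q + 1), chi q m s • coeff w q m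
  rw [intervalIntegral.integral_finset_sum
    (fun m _ => ((chi_integrable q m).smul_const _).intervalIntegrable), ← Finset.sum_sub_distrib]
  refine Finset.sum_congr rfl (fun m _ => ?_)
  rw [intervalIntegral.integral_smul_const, ← sub_smul]
  congr 1
  simp only [phi]
  exact intervalIntegral.integral_interval_sub_left
    ((chi_integrable q m).intervalIntegrable) ((chi_integrable q m).intervalIntegrable)

lemma chi0_abs_le (q : ℕ) (s : ℝ) : |chi q 0 s| ≤ 1 := by
  simp only [chi, if_pos rfl]
  split_ifs <;> simp

lemma dblock_bound (w : ℝ → E) (q : ℕ) (K : ℝ) (hK : 0 ≤ K)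
    (hc : ∀ m, m ≤ 2^q → ‖coeff w q m‖ ≤ K) (s : ℝ) :
    ‖dblock w (q+1) s‖ ≤ 2 * 2^q * K := by
  show ‖∑ m ∈ Finset.range (2 ^ q + 1), chi q m s • coeff w q m‖ ≤ 2 * 2^q * K
  refine (norm_sum_le _ _).trans ?_
  rw [Finset.sum_range_succ']
  have h0 : ‖chi q 0 s • coeff w q 0‖ ≤ K := by
    rw [norm_smul, Real.norm_eq_abs]
    nlinarith [chi0_abs_le q s, hc 0 (by positivity), norm_nonneg (coeff w q 0),
      abs_nonneg (chi q 0 s)]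
  have h1 : ∑ i ∈ Finset.range (2 ^ q), ‖chi q (i+1) s • coeff w q (i+1)‖ ≤ 2^q * K := by
    refine sum_support_le _ (2^q * K) (by positivity) (fun i => norm_nonneg _)
      (fun i hi => ?_) (fun i j hij hj => ?_)
    · rw [norm_smul, Real.norm_eq_abs]
      have := chi_abs_le q (i+1) s
      have := hc (i+1) (by omega)
      nlinarith [norm_nonneg (coeff w q (i+1)), abs_nonneg (chi q (i+1) s)]
    · by_cases hzi : chi q (i+1) s = 0
      · left; simp [hzi]
      · right
        have hi' := chi_ne_zero q (i+1) (Nat.succ_ne_zero i) hzi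
        have h2 : pt2 q (i+1) ≤ pt0 q (j+1) := pt2_le_pt0 q i j hij
        have : ¬ (pt0 q (j+1) ≤ s) := fun hcon => absurd (lt_of_lt_of_le hi'.2 (h2.trans hcon))
          (lt_irrefl s)
        have hz : chi q (j+1) s = 0 := by
          by_contra hcon
          exact this (chi_ne_zero q (j+1) (Nat.succ_ne_zero j) hcon).1
        simp [hz]
  have hpow : (1:ℝ) ≤ 2^q := one_le_pow₀ one_le_two
  nlinarith

lemma block_lip [CompleteSpace E] (w : ℝ → E) (q : ℕ) (K : ℝ) (hK : 0 ≤ K)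
    (hc : ∀ m, m ≤ 2^q → ‖coeff w q m‖ ≤ K) {x y : ℝ} (hxy : x ≤ y) :
    ‖block w (q+1) y - block w (q+1) x‖ ≤ 2 * 2^q * K * (y - x) := by
  rw [block_sub_eq]
  have := intervalIntegral.norm_integral_le_of_norm_le_const
    (fun s _ => dblock_bound w q K hK hc s : ∀ s ∈ uIoc x y, ‖dblock w (q+1) s‖ ≤ 2 * 2^q * K)
  rw [abs_of_nonneg (by linarith : (0:ℝ) ≤ y - x)] at this
  exact this

lemma phi_cont (p m : ℕ) : Continuous (phi p m) := by
  rcases eq_or_ne m 0 with rfl | hm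
  · rcases eq_or_ne p 0 with rfl | hp
    · have : phi 0 0 = fun t => min t 1 - min t 0 := funext phi_00
      rw [this]; fun_prop
    · have : phi p 0 = fun _ => (0:ℝ) := funext (phi_p0 p hp)
      rw [this]; fun_prop
  · have : phi p m = fun t => 2^p * (2 * min t (pt1 p m) - min t (pt0 p m) - min t (pt2 p m)) :=
      funext (phi_eq p m hm)
    rw [this]; fun_prop

lemma block_cont (w : ℝ → E) (k : ℕ) : Continuous (block w k) := by
  cases k with
  | zero => exact continuous_const
  | succ q =>
    show Continuous fun t => ∑ m ∈ Finset.range (2 ^ q + 1), phi q m t • coeff w q m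
    exact continuous_finset_sum _ (fun m _ => (phi_cont q m).smul continuous_const)

lemma psum_cont (w : ℝ → E) (k : ℕ) : Continuous (psum w k) :=
  continuous_finset_sum _ (fun m _ => block_cont w m)

lemma para_term_cont (v : ℝ → (E →L[ℝ] F)) (w : ℝ → E) (q : ℕ) :
    Continuous (fun t => (psum v q t) (block w (q+1) t)) :=
  (psum_cont v q).clm_apply (block_cont w (q+1))

lemma psum_succ (f : ℝ → E) (p : ℕ) (t : ℝ) :
    psum f (p+1) t = psum f p t + block f (p+1) t := by
  rw [psum, Finset.sum_range_succ]; rfl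

lemma psum_interp (f : ℝ → E) : ∀ (p k : ℕ), k < 2^(p+1) → ∀ t : ℝ,
    (k:ℝ)/2^(p+1) ≤ t → t ≤ ((k:ℝ)+1)/2^(p+1) →
    psum f (p+1) t = f ((k:ℝ)/2^(p+1))
      + (2^(p+1)*t - (k:ℝ)) • (f (((k:ℝ)+1)/2^(p+1)) - f ((k:ℝ)/2^(p+1))) := by
  intro p
  induction p with
  | zero =>
    intro k hk t h1 h2
    have hpsum : psum f 1 t = f 0 + phi 0 0 t • coeff f 0 0 + phi 0 1 t • coeff f 0 1 := by
      show (∑ j ∈ Finset.range 2, block f j t) = _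
      rw [Finset.sum_range_succ, Finset.sum_range_one]
      show block f 0 t + block f 1 t = _
      have : block f 1 t = ∑ m ∈ Finset.range 2, phi 0 m t • coeff f 0 m := rfl
      rw [this, Finset.sum_range_succ, Finset.sum_range_one]
      show f 0 + (phi 0 0 t • coeff f 0 0 + phi 0 1 t • coeff f 0 1) = _
      rw [add_assoc]
    interval_cases k
    · -- k = 0 : 0 ≤ t ≤ 1/2
      norm_num at h1 h2 ⊢
      rw [hpsum, phi_00, coeff, if_pos rfl, if_pos rfl, coeff, if_neg one_ne_zero,
        phi_eq 0 1 one_ne_zero]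
      have hpt0 : pt0 0 1 = 0 := by norm_num [pt0]
      have hpt1 : pt1 0 1 = 1/2 := by norm_num [pt1]
      have hpt2 : pt2 0 1 = 1 := by norm_num [pt2]
      rw [hpt0, hpt1, hpt2]
      rw [min_eq_left (by linarith : t ≤ (1:ℝ)), min_eq_right (by linarith : (0:ℝ) ≤ t),
        min_eq_left (h2 : t ≤ (1:ℝ)/2)]
      module
    · -- k = 1 : 1/2 ≤ t ≤ 1
      norm_num at h1 h2 ⊢
      rw [hpsum, phi_00, coeff, if_pos rfl, if_pos rfl, coeff, if_neg one_ne_zero,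
        phi_eq 0 1 one_ne_zero]
      have hpt0 : pt0 0 1 = 0 := by norm_num [pt0]
      have hpt1 : pt1 0 1 = 1/2 := by norm_num [pt1]
      have hpt2 : pt2 0 1 = 1 := by norm_num [pt2]
      rw [hpt0, hpt1, hpt2]
      rw [min_eq_left (h2 : t ≤ (1:ℝ)), min_eq_right (by linarith : (0:ℝ) ≤ t),
        min_eq_right (h1 : (1:ℝ)/2 ≤ t)]
      module
  | succ p IH =>
    intro k hk t h1 h2
    have hp2 : (0:ℝ) < 2^(p+2) := by positivity
    have hp1 : (0:ℝ) < 2^(p+1) := by positivity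
    have hpow : (2:ℝ)^(p+2) = 2^(p+1) * 2 := by rw [pow_succ]
    rw [psum_succ]
    have hblock : block f (p+2) t
        = ∑ m ∈ Finset.range (2^(p+1) + 1), phi (p+1) m t • coeff f (p+1) m := rfl
    rcases Nat.even_or_odd k with ⟨k', rfl⟩ | ⟨k', rfl⟩
    · -- k = k' + k' (even)
      have hk' : k' < 2^(p+1) := by
        have : 2^(p+2) = 2 * 2^(p+1) := by ring
        omega
      have castk : ((k' + k' : ℕ):ℝ) = 2*(k':ℝ) := by push_cast; ring
      rw [castk] at h1 h2 ⊢
      have ha : pt0 (p+1) (k'+1) = (k':ℝ)/2^(p+1) := by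
        rw [pt0]; push_cast; ring
      have hb : pt1 (p+1) (k'+1) = (2*(k':ℝ)+1)/2^(p+2) := by
        rw [pt1]; push_cast; ring
      have hcc : pt2 (p+1) (k'+1) = ((k':ℝ)+1)/2^(p+1) := by
        rw [pt2]; push_cast; ring
      have ht0 : (k':ℝ)/2^(p+1) ≤ t := by
        refine le_trans ?_ h1
        rw [div_le_div_iff₀ hp1 hp2, hpow]; ring_nf; nlinarith
      have ht2 : t ≤ ((k':ℝ)+1)/2^(p+1) := by
        refine h2.trans ?_
        rw [div_le_div_iff₀ hp2 hp1, hpow]; nlinarith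
      have htb : t ≤ pt1 (p+1) (k'+1) := by rw [hb]; linarith
      -- single term
      have hsingle : block f (p+2) t = phi (p+1) (k'+1) t • coeff f (p+1) (k'+1) := by
        rw [hblock]
        refine Finset.sum_eq_single_of_mem (k'+1) (Finset.mem_range.2 (by omega)) ?_
        intro m hm hne
        rcases Nat.eq_zero_or_pos m with rfl | hmpos
        · rw [phi_p0 (p+1) (Nat.succ_ne_zero p), zero_smul]
        rcases lt_or_gt_of_ne hne with hlt | hgt
        · have : pt2 (p+1) m ≤ t := by
            refine le_trans ?_ ht0
            rw [pt2]
            gcongr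
            have : (m:ℝ) ≤ k' := by exact_mod_cast (by omega : m ≤ k')
            linarith
          rw [phi_zero_of_ge (p+1) m (by omega) this, zero_smul]
        · have : t ≤ pt0 (p+1) m := by
            refine ht2.trans ?_
            rw [pt0]
            gcongr
            have : ((k':ℝ)+1) + 1 ≤ m := by exact_mod_cast (by omega : k' + 2 ≤ m)
            linarith
          rw [phi_zero_of_le (p+1) m (by omega) this, zero_smul]
      rw [hsingle, IH k' hk' t ht0 ht2]
      have hphi : phi (p+1) (k'+1) t = 2^(p+1)*t - k' := by
        rw [phi_eq (p+1) (k'+1) (Nat.succ_ne_zero k'), min_eq_left htb, min_eq_right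
          (by rw [ha]; exact ht0), min_eq_left (by rw [hcc]; exact ht2)]
        rw [ha]
        field_simp
        ring
      rw [hphi, coeff, if_neg (Nat.succ_ne_zero k'), ha, hb, hcc]
      rw [show (2*(k':ℝ))/2^(p+1+1) = (k':ℝ)/2^(p+1) from by ring,
        show (2*(k':ℝ)+1)/2^(p+1+1) = (2*(k':ℝ)+1)/2^(p+2) from by ring,
        show (2:ℝ)^(p+1+1)*t - 2*(k':ℝ) = 2*(2^(p+1)*t - (k':ℝ)) from by ring]
      module
    · -- k = 2k'+1 (odd)
      have hk' : k' < 2^(p+1) := by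
        have : 2^(p+2) = 2 * 2^(p+1) := by ring
        omega
      have castk : ((2*k' + 1 : ℕ):ℝ) = 2*(k':ℝ)+1 := by push_cast; ring
      rw [castk] at h1 h2 ⊢
      have ha : pt0 (p+1) (k'+1) = (k':ℝ)/2^(p+1) := by rw [pt0]; push_cast; ring
      have hb : pt1 (p+1) (k'+1) = (2*(k':ℝ)+1)/2^(p+2) := by rw [pt1]; push_cast; ring
      have hcc : pt2 (p+1) (k'+1) = ((k':ℝ)+1)/2^(p+1) := by rw [pt2]; push_cast; ring
      have ht0 : (k':ℝ)/2^(p+1) ≤ t := by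
        refine le_trans ?_ h1
        rw [div_le_div_iff₀ hp1 hp2, hpow]; nlinarith
      have ht2 : t ≤ ((k':ℝ)+1)/2^(p+1) := by
        refine h2.trans ?_
        rw [div_le_div_iff₀ hp2 hp1, hpow]; nlinarith
      have htb : pt1 (p+1) (k'+1) ≤ t := by rw [hb]; linarith
      have hsingle : block f (p+2) t = phi (p+1) (k'+1) t • coeff f (p+1) (k'+1) := by
        rw [hblock]
        refine Finset.sum_eq_single_of_mem (k'+1) (Finset.mem_range.2 (by omega)) ?_
        intro m hm hne
        rcases Nat.eq_zero_or_pos m with rfl | hmpos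
        · rw [phi_p0 (p+1) (Nat.succ_ne_zero p), zero_smul]
        rcases lt_or_gt_of_ne hne with hlt | hgt
        · have : pt2 (p+1) m ≤ t := by
            refine le_trans ?_ ht0
            rw [pt2]
            gcongr
            have : (m:ℝ) ≤ k' := by exact_mod_cast (by omega : m ≤ k')
            linarith
          rw [phi_zero_of_ge (p+1) m (by omega) this, zero_smul]
        · have : t ≤ pt0 (p+1) m := by
            refine ht2.trans ?_
            rw [pt0]
            gcongr
            have : ((k':ℝ)+1) + 1 ≤ m := by exact_mod_cast (by omega : k' + 2 ≤ m)
            linarith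
          rw [phi_zero_of_le (p+1) m (by omega) this, zero_smul]
      rw [hsingle, IH k' hk' t ht0 ht2]
      have hphi : phi (p+1) (k'+1) t = (k':ℝ) + 1 - 2^(p+1)*t := by
        rw [phi_eq (p+1) (k'+1) (Nat.succ_ne_zero k'), min_eq_right htb,
          min_eq_right (by rw [ha]; exact ht0), min_eq_left (by rw [hcc]; exact ht2), hb, ha]
        field_simp
        ring
      rw [hphi, coeff, if_neg (Nat.succ_ne_zero k'), ha, hb, hcc]
      rw [show (2*(k':ℝ)+1)/2^(p+1+1) = (2*(k':ℝ)+1)/2^(p+2) from by ring,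
        show (2*(k':ℝ)+1+1)/2^(p+1+1) = ((k':ℝ)+1)/2^(p+1) from by ring,
        show (2:ℝ)^(p+1+1)*t - (2*(k':ℝ)+1) = 2*(2^(p+1)*t - (k':ℝ)) - 1 from by ring]
      module

lemma pt2_sub_pt0 (p m : ℕ) : pt2 p m - pt0 p m = 1/2^p := by
  rw [pt0, pt2]; field_simp; ring

lemma pt2_le_one (p m : ℕ) (hm2 : m ≤ 2^p) : pt2 p m ≤ 1 := by
  rw [pt2, div_le_one (by positivity)]
  exact_mod_cast hm2

lemma exists_cell (N : ℕ) (hN : 0 < N) {t : ℝ} (h0 : 0 ≤ t) (h1 : t ≤ 1) :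
    ∃ k : ℕ, k < N ∧ (k:ℝ)/N ≤ t ∧ t ≤ ((k:ℝ)+1)/N := by
  have hNR : (0:ℝ) < N := by exact_mod_cast hN
  refine ⟨min (⌊t*N⌋₊) (N-1), by omega, ?_, ?_⟩
  · rw [div_le_iff₀ hNR]
    calc ((min (⌊t*N⌋₊) (N-1) : ℕ):ℝ) ≤ (⌊t*N⌋₊ : ℝ) := by
          exact_mod_cast min_le_left _ _
      _ ≤ t*N := Nat.floor_le (by positivity)
  · rcases le_or_gt (⌊t*N⌋₊) (N-1) with h | h
    · rw [min_eq_left h, le_div_iff₀ hNR]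
      have := Nat.lt_floor_add_one (t*N)
      push_cast
      linarith
    · rw [min_eq_right h.le]
      have : ((N-1:ℕ):ℝ) + 1 = N := by
        have : 1 ≤ N := hN
        push_cast [Nat.cast_sub this]
        ring
      rw [this, div_self (ne_of_gt hNR)]
      exact h1

lemma psum_zero_eq (v : ℝ → E) (t : ℝ) : psum v 0 t = v 0 := by
  rw [psum, Finset.sum_range_one]
  rfl

lemma psum_bound (v : ℝ → E) (Mv : ℝ) (hv : ∀ s ∈ Icc (0:ℝ) 1, ‖v s‖ ≤ Mv)
    (q : ℕ) {t : ℝ} (ht : t ∈ Icc (0:ℝ) 1) : ‖psum v q t‖ ≤ Mv := by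
  cases q with
  | zero => rw [psum_zero_eq]; exact hv 0 ⟨le_rfl, zero_le_one⟩
  | succ q =>
    obtain ⟨k, hk, hk1, hk2⟩ := exists_cell (2^(q+1)) (by positivity) ht.1 ht.2
    have hcast : ((2^(q+1):ℕ):ℝ) = 2^(q+1) := by push_cast; ring
    rw [hcast] at hk1 hk2
    rw [psum_interp v q k hk t hk1 hk2]
    have hklt : ((k:ℝ)+1) ≤ 2^(q+1) := by exact_mod_cast hk
    have hl : (k:ℝ)/2^(q+1) ∈ Icc (0:ℝ) 1 := by
      constructor
      · positivity
      · rw [div_le_one (by positivity)]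
        linarith
    have hr : ((k:ℝ)+1)/2^(q+1) ∈ Icc (0:ℝ) 1 := by
      constructor
      · positivity
      · rw [div_le_one (by positivity)]
        linarith
    set θ : ℝ := 2^(q+1)*t - k with hθ
    have hθ0 : 0 ≤ θ := by
      rw [hθ]
      rw [div_le_iff₀ (by positivity : (0:ℝ) < 2^(q+1))] at hk1
      linarith
    have hθ1 : θ ≤ 1 := by
      rw [hθ]
      rw [le_div_iff₀ (by positivity : (0:ℝ) < 2^(q+1))] at hk2
      linarith
    have hrw : v ((k:ℝ)/2^(q+1)) + θ • (v (((k:ℝ)+1)/2^(q+1)) - v ((k:ℝ)/2^(q+1)))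
        = (1-θ) • v ((k:ℝ)/2^(q+1)) + θ • v (((k:ℝ)+1)/2^(q+1)) := by module
    rw [hrw]
    calc ‖(1-θ) • v ((k:ℝ)/2^(q+1)) + θ • v (((k:ℝ)+1)/2^(q+1))‖
        ≤ ‖(1-θ) • v ((k:ℝ)/2^(q+1))‖ + ‖θ • v (((k:ℝ)+1)/2^(q+1))‖ := norm_add_le _ _
      _ = (1-θ) * ‖v ((k:ℝ)/2^(q+1))‖ + θ * ‖v (((k:ℝ)+1)/2^(q+1))‖ := by
          rw [norm_smul, norm_smul, Real.norm_eq_abs, Real.norm_eq_abs,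
            abs_of_nonneg (by linarith), abs_of_nonneg hθ0]
      _ ≤ (1-θ) * Mv + θ * Mv := by
          have g1 := hv _ hl
          have g2 := hv _ hr
          have : (0:ℝ) ≤ 1 - θ := by linarith
          nlinarith
      _ = Mv := by ring

lemma psum_pts (v : ℝ → E) (Mv : ℝ) (hv : ∀ s ∈ Icc (0:ℝ) 1, ‖v s‖ ≤ Mv)
    (p q m : ℕ) (hm : m ≠ 0) (hm2 : m ≤ 2^p) (hq : q ≤ p) :
    psum v q (pt0 p m) + psum v q (pt2 p m) = (2:ℝ) • psum v q (pt1 p m) ∧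
    ∃ u : E, psum v q (pt2 p m) - psum v q (pt0 p m) = ((2:ℝ)^q/2^p) • u ∧ ‖u‖ ≤ 2 * Mv := by
  have hMv : 0 ≤ Mv := (norm_nonneg _).trans (hv 0 ⟨le_rfl, zero_le_one⟩)
  cases q with
  | zero =>
    refine ⟨?_, 0, ?_, by simpa using hMv⟩
    · rw [psum_zero_eq, psum_zero_eq, psum_zero_eq, two_smul]
    · rw [psum_zero_eq, psum_zero_eq, sub_self, smul_zero]
  | succ q =>
    obtain ⟨d, rfl⟩ : ∃ d, p = (q+1) + d := ⟨p - (q+1), by omega⟩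
    set Q : ℕ := q + 1 with hQ
    have hdpos : (0:ℕ) < 2^d := by positivity
    set k : ℕ := (m-1) / 2^d with hkdef
    have hA : k * 2^d ≤ m - 1 := Nat.div_mul_le_self _ _
    have hB : m - 1 < (k+1) * 2^d :=
      (Nat.div_lt_iff_lt_mul hdpos).1 (Nat.lt_succ_self k)
    have hm1 : 1 ≤ m := Nat.one_le_iff_ne_zero.2 hm
    have hBm : m ≤ (k+1) * 2^d := by omega
    have hppow : (2:ℕ)^(Q+d) = 2^Q * 2^d := by rw [pow_add]
    have hk : k < 2^Q := by
      have h1 : k * 2^d < 2^Q * 2^d := by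
        calc k * 2^d ≤ m - 1 := hA
          _ < 2^(Q+d) := by omega
          _ = 2^Q * 2^d := hppow
      exact Nat.lt_of_mul_lt_mul_right h1
    -- real inequalities
    have hRpow : (2:ℝ)^(Q+d) = 2^Q * 2^d := by rw [pow_add]
    have hl0 : (k:ℝ)/2^Q ≤ pt0 (Q+d) m := by
      rw [pt0, div_le_div_iff₀ (by positivity) (by positivity), hRpow]
      have : ((k * 2^d : ℕ):ℝ) ≤ ((m-1:ℕ):ℝ) := by exact_mod_cast hA
      rw [Nat.cast_sub hm1] at this
      push_cast at this ⊢
      have h2Q : (0:ℝ) < 2^Q := by positivity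
      nlinarith [mul_le_mul_of_nonneg_right this h2Q.le]
    have hr2 : pt2 (Q+d) m ≤ ((k:ℝ)+1)/2^Q := by
      rw [pt2, div_le_div_iff₀ (by positivity) (by positivity), hRpow]
      have : ((m:ℕ):ℝ) ≤ (((k+1) * 2^d : ℕ):ℝ) := by exact_mod_cast hBm
      push_cast at this ⊢
      have h2Q : (0:ℝ) < 2^Q := by positivity
      nlinarith [mul_le_mul_of_nonneg_right this h2Q.le]
    have h01 : pt0 (Q+d) m ≤ pt1 (Q+d) m := (pt0_lt_pt1 _ m).le
    have h12 : pt1 (Q+d) m ≤ pt2 (Q+d) m := (pt1_lt_pt2 _ m).le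
    have hi0 := psum_interp v q k hk (pt0 (Q+d) m) hl0 ((h01.trans h12).trans hr2)
    have hi1 := psum_interp v q k hk (pt1 (Q+d) m) (hl0.trans h01) (h12.trans hr2)
    have hi2 := psum_interp v q k hk (pt2 (Q+d) m) (hl0.trans (h01.trans h12)) hr2
    constructor
    · rw [hi0, hi1, hi2]
      have hθ : 2^(q+1)*pt0 (Q+d) m - (k:ℝ)
          = 2*(2^(q+1)*pt1 (Q+d) m - k) - (2^(q+1)*pt2 (Q+d) m - k) := by
        linear_combination (2:ℝ)^(q+1) * (pt_midpoint (Q+d) m)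
      rw [hθ]
      module
    · refine ⟨v (((k:ℝ)+1)/2^Q) - v ((k:ℝ)/2^Q), ?_, ?_⟩
      · rw [hi0, hi2]
        have hθ : 2^(q+1)*pt2 (Q+d) m - (k:ℝ)
            = (2^(q+1)*pt0 (Q+d) m - k) + 2^(q+1)/2^(Q+d) := by
          linear_combination (2:ℝ)^(q+1) * (pt2_sub_pt0 (Q+d) m)
        rw [hθ]
        module
      · have hklt : ((k:ℝ)+1) ≤ 2^Q := by exact_mod_cast hk
        have hl : (k:ℝ)/2^Q ∈ Icc (0:ℝ) 1 := by
          constructor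
          · positivity
          · rw [div_le_one (by positivity)]; linarith
        have hr : ((k:ℝ)+1)/2^Q ∈ Icc (0:ℝ) 1 := by
          constructor
          · positivity
          · rw [div_le_one (by positivity)]; linarith
        calc ‖v (((k:ℝ)+1)/2^Q) - v ((k:ℝ)/2^Q)‖
            ≤ ‖v (((k:ℝ)+1)/2^Q)‖ + ‖v ((k:ℝ)/2^Q)‖ := norm_sub_le _ _
          _ ≤ 2 * Mv := by
              have := hv _ hl
              have := hv _ hr
              linarith

lemma block_grid (w : ℝ → E) (q j : ℕ) (hq : q ≠ 0) : block w (q+1) ((j:ℝ)/2^q) = 0 := by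
  show (∑ m ∈ Finset.range (2^q+1), phi q m ((j:ℝ)/2^q) • coeff w q m) = 0
  refine Finset.sum_eq_zero fun m _ => ?_
  rcases eq_or_ne m 0 with rfl | hm
  · rw [phi_p0 q hq, zero_smul]
  · rw [phi_grid q m j hm, zero_smul]

lemma block_succ_at_zero (w : ℝ → E) (q : ℕ) : block w (q+1) 0 = 0 := by
  rcases eq_or_ne q 0 with rfl | hq
  · show (∑ m ∈ Finset.range 2, phi 0 m 0 • coeff w 0 m) = 0
    refine Finset.sum_eq_zero fun m hm => ?_
    have hmlt : m < 2 := Finset.mem_range.1 hm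
    interval_cases m
    · rw [phi_00]; norm_num
    · have h : phi 0 1 (0:ℝ) = 0 := by
        have := phi_grid 0 1 0 one_ne_zero
        simpa using this
      rw [h, zero_smul]
  · rw [show (0:ℝ) = ((0:ℕ):ℝ)/2^q from by simp]
    exact block_grid w q 0 hq

lemma block_succ_at_one (w : ℝ → E) (q : ℕ) (hq : q ≠ 0) : block w (q+1) 1 = 0 := by
  rw [show (1:ℝ) = ((2^q:ℕ):ℝ)/2^q from by push_cast; rw [div_self (by positivity)]]
  exact block_grid w q (2^q) hq

lemma block_one_at_one (w : ℝ → E) : block w 1 1 = w 1 - w 0 := by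
  show (∑ m ∈ Finset.range 2, phi 0 m 1 • coeff w 0 m) = _
  rw [Finset.sum_range_succ, Finset.sum_range_one]
  have h1 : phi 0 0 1 = 1 := by rw [phi_00]; norm_num
  have h2 : phi 0 1 (1:ℝ) = 0 := by
    have := phi_grid 0 1 1 one_ne_zero
    simpa using this
  rw [h1, h2, coeff_zero_zero, one_smul, zero_smul, add_zero]

lemma clm_second_diff (A0 A1 A2 : E →L[ℝ] F) (B0 B1 B2 : E) (h : A0 + A2 = (2:ℝ) • A1) :
    A1 B1 + A1 B1 - A0 B0 - A2 B2
      = A1 (B1 + B1 - B0 - B2) + (1/2 : ℝ) • ((A2 - A0) (B0 - B2)) := by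
  have hA0 : A0 = (2:ℝ) • A1 - A2 := by rw [← h]; abel
  subst hA0
  simp only [ContinuousLinearMap.sub_apply, ContinuousLinearMap.smul_apply,
    ContinuousLinearMap.add_apply, map_add, map_sub]
  module

lemma pt1_mem (p m : ℕ) (hm : m ≠ 0) (hm2 : m ≤ 2^p) : pt1 p m ∈ Icc (0:ℝ) 1 :=
  ⟨(pt0_nonneg p m hm).trans (pt0_lt_pt1 p m).le,
    ((pt1_lt_pt2 p m).le.trans (pt2_le_one p m hm2))⟩

lemma coeff_block (w : ℝ → E) (p q m : ℕ) (hm : m ≠ 0) (hm2 : m ≤ 2^p) (hq : q ≤ p) :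
    block w (q+1) (pt1 p m) + block w (q+1) (pt1 p m) - block w (q+1) (pt0 p m)
      - block w (q+1) (pt2 p m) = if q = p then coeff w p m else 0 := by
  show (∑ m' ∈ Finset.range (2^q+1), phi q m' (pt1 p m) • coeff w q m')
      + (∑ m' ∈ Finset.range (2^q+1), phi q m' (pt1 p m) • coeff w q m')
      - (∑ m' ∈ Finset.range (2^q+1), phi q m' (pt0 p m) • coeff w q m')
      - (∑ m' ∈ Finset.range (2^q+1), phi q m' (pt2 p m) • coeff w q m') = _
  rw [← Finset.sum_add_distrib, ← Finset.sum_sub_distrib, ← Finset.sum_sub_distrib]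
  have hcong : ∀ m' ∈ Finset.range (2^q+1),
      (phi q m' (pt1 p m) • coeff w q m' + phi q m' (pt1 p m) • coeff w q m'
        - phi q m' (pt0 p m) • coeff w q m' - phi q m' (pt2 p m) • coeff w q m')
      = (if q = p ∧ m' = m then (1:ℝ) else 0) • coeff w q m' := by
    intro m' _
    rw [← phi_second_diff p q m m' hm hm2 hq]
    module
  rw [Finset.sum_congr rfl hcong]
  by_cases hqp : q = p
  · subst hqp
    rw [if_pos rfl]
    simp only [true_and, ite_smul, one_smul, zero_smul]
    rw [Finset.sum_ite_eq' (Finset.range (2^q+1)) m (coeff w q)]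
    rw [if_pos (Finset.mem_range.2 (by omega))]
  · rw [if_neg hqp]
    refine Finset.sum_eq_zero fun m' _ => ?_
    rw [if_neg (fun h => hqp h.1), zero_smul]

lemma coeff_para_term_zero [CompleteSpace E] [CompleteSpace F]
    (v : ℝ → (E →L[ℝ] F)) (w : ℝ → E) (p q m : ℕ)
    (hm : m ≠ 0) (hq : p < q) :
    coeff (fun t => (psum v q t) (block w (q+1) t)) p m = 0 := by
  have key : ∀ j : ℕ, block w (q+1) ((j:ℝ)/2^(p+1)) = 0 := by
    intro j
    obtain ⟨d, rfl⟩ : ∃ d, q = (p+1) + d := ⟨q - (p+1), by omega⟩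
    have he : ((j:ℝ))/2^(p+1) = ((j*2^d:ℕ):ℝ)/2^(p+1+d) := by
      push_cast
      rw [pow_add]
      rw [div_eq_div_iff (by positivity) (by positivity)]
      ring
    rw [he]
    exact block_grid w (p+1+d) (j*2^d) (by omega)
  have hm1 : 1 ≤ m := Nat.one_le_iff_ne_zero.2 hm
  have c0 : pt0 p m = ((2*m-2:ℕ):ℝ)/2^(p+1) := by
    rw [pt0]
    have h2 : ((2*m-2 : ℕ):ℝ) = 2*(m:ℝ) - 2 := by
      push_cast [Nat.cast_sub (by omega : 2 ≤ 2*m)]; ring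
    rw [h2, pow_succ]
    rw [div_eq_div_iff (by positivity) (by positivity)]
    ring
  have c1 : pt1 p m = ((2*m-1:ℕ):ℝ)/2^(p+1) := by
    rw [pt1]
    have h2 : ((2*m-1 : ℕ):ℝ) = 2*(m:ℝ) - 1 := by
      push_cast [Nat.cast_sub (by omega : 1 ≤ 2*m)]; ring
    rw [h2]
  have c2 : pt2 p m = ((2*m:ℕ):ℝ)/2^(p+1) := by
    rw [pt2, pow_succ]
    push_cast
    rw [div_eq_div_iff (by positivity) (by positivity)]
    ring
  simp only [coeff, if_neg hm, c0, c1, c2, key, map_zero]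
  abel

lemma coeff_term_bound [CompleteSpace E] [CompleteSpace F]
    (v : ℝ → (E →L[ℝ] F)) (w : ℝ → E) (Mv Kq : ℝ)
    (hv : ∀ s ∈ Icc (0:ℝ) 1, ‖v s‖ ≤ Mv) (hKq : 0 ≤ Kq)
    (p q m : ℕ)
    (hc : ∀ m', m' ≤ 2^q → ‖coeff w q m'‖ ≤ Kq)
    (hm : m ≠ 0) (hm2 : m ≤ 2^p) (hq : q ≤ p) :
    ‖coeff (fun t => (psum v q t) (block w (q+1) t)) p m‖
      ≤ (if q = p then Mv * Kq else 0) + 2 * Mv * Kq * 4^q / 4^p := by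
  have hMv : 0 ≤ Mv := (norm_nonneg _).trans (hv 0 ⟨le_rfl, zero_le_one⟩)
  obtain ⟨hmid, u, hu, hunorm⟩ := psum_pts v Mv hv p q m hm hm2 hq
  simp only [coeff, if_neg hm]
  rw [clm_second_diff _ _ _ _ _ _ hmid]
  refine (norm_add_le _ _).trans ?_
  have hB : block w (q+1) (pt1 p m) + block w (q+1) (pt1 p m) - block w (q+1) (pt0 p m)
      - block w (q+1) (pt2 p m) = if q = p then coeff w p m else 0 :=
    coeff_block w p q m hm hm2 hq
  have t1 : ‖(psum v q (pt1 p m)) (block w (q+1) (pt1 p m) + block w (q+1) (pt1 p m)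
      - block w (q+1) (pt0 p m) - block w (q+1) (pt2 p m))‖ ≤ if q = p then Mv * Kq else 0 := by
    by_cases hqp : q = p
    · subst hqp
      rw [hB, if_pos rfl, if_pos rfl]
      calc ‖(psum v q (pt1 q m)) (coeff w q m)‖
          ≤ ‖psum v q (pt1 q m)‖ * ‖coeff w q m‖ := ContinuousLinearMap.le_opNorm _ _
        _ ≤ Mv * Kq :=
            mul_le_mul (psum_bound v Mv hv q (pt1_mem q m hm hm2)) (hc m hm2)
              (norm_nonneg _) hMv
    · rw [hB, if_neg hqp, if_neg hqp, map_zero, norm_zero]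
  have t2 : ‖(1/2 : ℝ) • ((psum v q (pt2 p m) - psum v q (pt0 p m))
      (block w (q+1) (pt0 p m) - block w (q+1) (pt2 p m)))‖ ≤ 2 * Mv * Kq * 4^q / 4^p := by
    rw [hu, norm_smul, ContinuousLinearMap.smul_apply, norm_smul]
    have hBd : ‖block w (q+1) (pt0 p m) - block w (q+1) (pt2 p m)‖
        ≤ 2 * 2^q * Kq * (1/2^p) := by
      rw [norm_sub_rev]
      have := block_lip w q Kq hKq hc (((pt0_lt_pt1 p m).trans (pt1_lt_pt2 p m)).le)
      rwa [pt2_sub_pt0 p m] at this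
    have hud : ‖u (block w (q+1) (pt0 p m) - block w (q+1) (pt2 p m))‖
        ≤ (2*Mv) * (2 * 2^q * Kq * (1/2^p)) := by
      refine (ContinuousLinearMap.le_opNorm _ _).trans ?_
      have := norm_nonneg (block w (q+1) (pt0 p m) - block w (q+1) (pt2 p m))
      nlinarith
    have hq4 : (4:ℝ)^q = 2^q * 2^q := by
      rw [show (4:ℝ) = 2*2 from by norm_num, mul_pow]
    have hp4 : (4:ℝ)^p = 2^p * 2^p := by
      rw [show (4:ℝ) = 2*2 from by norm_num, mul_pow]
    rw [Real.norm_eq_abs, Real.norm_eq_abs, abs_of_nonneg (by norm_num : (0:ℝ) ≤ 1/2),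
      abs_of_nonneg (by positivity : (0:ℝ) ≤ (2:ℝ)^q/2^p)]
    rw [hq4, hp4]
    have h2q : (0:ℝ) < 2^q := by positivity
    have h2p : (0:ℝ) < 2^p := by positivity
    calc 1/2 * ((2:ℝ)^q/2^p * ‖u (block w (q+1) (pt0 p m) - block w (q+1) (pt2 p m))‖)
        ≤ 1/2 * ((2:ℝ)^q/2^p * ((2*Mv) * (2 * 2^q * Kq * (1/2^p)))) := by gcongr
      _ = 2 * Mv * Kq * (2^q*2^q) / (2^p*2^p) := by field_simp
  linarith

end Sch

open Sch in
/-- The paraproduct `π_<(v,w) = ∑_{p≥0} S_{p-1}v Δ_p w` maps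
`C([0,1], L(ℝ^d,ℝ^n)) × C^β(ℝ^d)` into `C^β(ℝ^n)` with `‖π_<(v,w)‖_β ≲ ‖v‖_∞ ‖w‖_β`. -/
theorem paraproduct_bound (β : ℝ) (hβ0 : 0 < β) (hβ2 : β < 2) :
    ∃ C > (0:ℝ), ∀ (d n : ℕ)
      (v : ℝ → (EuclideanSpace ℝ (Fin d) →L[ℝ] EuclideanSpace ℝ (Fin n)))
      (w : ℝ → EuclideanSpace ℝ (Fin d)) (Mv Kw : ℝ),
      ContinuousOn v (Icc 0 1) → ContinuousOn w (Icc 0 1) →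
      (∀ t ∈ Icc (0:ℝ) 1, ‖v t‖ ≤ Mv) → CoeffBound β w Kw →
      (∀ t ∈ Icc (0:ℝ) 1, Summable fun p : ℕ => (psum v p t) (block w (p + 1) t)) ∧
      ContinuousOn (para v w) (Icc 0 1) ∧
      CoeffBound β (para v w) (C * Mv * Kw) := by
  have h2pos : (0:ℝ) < 2 := two_pos
  set r : ℝ := (2:ℝ)^(-β) with hrdef
  have hr0 : 0 < r := Real.rpow_pos_of_pos h2pos _
  have hr1 : r < 1 := Real.rpow_lt_one_of_one_lt_of_neg one_lt_two (by linarith)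
  have hrq : 1/4 < r := by
    have h4 : (2:ℝ)^(-(2:ℝ)) = 1/4 := by
      rw [Real.rpow_neg h2pos.le, show ((2:ℝ)) = ((2:ℕ):ℝ) from by norm_num]
      rw [Real.rpow_natCast]
      norm_num
    have := (Real.rpow_lt_rpow_left_iff (x := 2) one_lt_two).2
      (by linarith : -(2:ℝ) < -β)
    rw [h4] at this
    exact this
  set s4 : ℝ := 4 * r with hs4def
  have hs1 : 1 < s4 := by rw [hs4def]; linarith
  set C : ℝ := 1 + 2*s4/(s4-1) with hCdef
  have hfrac : 0 < 2*s4/(s4-1) := div_pos (by linarith) (by linarith)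
  have hC1 : 1 ≤ C := by rw [hCdef]; linarith
  refine ⟨C, by linarith, ?_⟩
  intro d n v w Mv Kw hvcont hwcont hv hw
  have hMv : 0 ≤ Mv := (norm_nonneg _).trans (hv 0 ⟨le_rfl, zero_le_one⟩)
  have hKw : 0 ≤ Kw := le_trans (by positivity) hw.1
  -- coefficient bounds in geometric form
  have hrpow : ∀ q : ℕ, ((2:ℝ)^(β*(q:ℝ)))⁻¹ = r^q := by
    intro q
    have h1 : ((2:ℝ)^(β*(q:ℝ)))⁻¹ = (2:ℝ)^(-(β*(q:ℝ))) :=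
      (Real.rpow_neg h2pos.le _).symm
    have h2 : r^q = (2:ℝ)^((-β)*(q:ℝ)) := by
      rw [hrdef, ← Real.rpow_natCast ((2:ℝ)^(-β)) q, ← Real.rpow_mul h2pos.le]
    rw [h1, h2]
    ring_nf
  have hrppos : ∀ x : ℝ, (0:ℝ) < (2:ℝ)^x := fun x => Real.rpow_pos_of_pos h2pos _
  have hcoeff : ∀ q m', m' ≤ 2^q → ‖coeff w q m'‖ ≤ Kw * r^q := by
    intro q m' hm'
    have h := hw.2 q m' hm'
    rw [← hrpow q, ← div_eq_mul_inv, le_div_iff₀ (hrppos _)]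
    calc ‖coeff w q m'‖ * (2:ℝ)^(β*(q:ℝ)) = (2:ℝ)^(β*(q:ℝ)) * ‖coeff w q m'‖ := mul_comm _ _
      _ ≤ Kw := h
  have hKq0 : ∀ q:ℕ, 0 ≤ Kw * r^q := fun q => by positivity
  have hterm : ∀ (q:ℕ), ∀ t ∈ Icc (0:ℝ) 1,
      ‖(psum v q t) (block w (q+1) t)‖ ≤ (2*Mv*Kw) * r^q := by
    intro q t ht
    calc ‖(psum v q t) (block w (q+1) t)‖
        ≤ ‖psum v q t‖ * ‖block w (q+1) t‖ := ContinuousLinearMap.le_opNorm _ _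
      _ ≤ Mv * (2 * (Kw * r^q)) :=
          mul_le_mul (psum_bound v Mv hv q ht)
            (block_bound w q (Kw*r^q) (hKq0 q) (fun m hm => hcoeff q m hm) t)
            (norm_nonneg _) hMv
      _ = (2*Mv*Kw) * r^q := by ring
  have hgeosum : Summable (fun q : ℕ => (2*Mv*Kw) * r^q) :=
    (summable_geometric_of_lt_one hr0.le hr1).mul_left _
  have hsummable : ∀ t ∈ Icc (0:ℝ) 1,
      Summable fun q : ℕ => (psum v q t) (block w (q+1) t) := by
    intro t ht
    exact Summable.of_norm_bounded hgeosum (fun q => hterm q t ht)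
  have hpara0 : para v w 0 = 0 := by
    show (∑' q:ℕ, (psum v q 0) (block w (q+1) 0)) = 0
    have : ∀ q:ℕ, (psum v q 0) (block w (q+1) 0) = 0 := fun q => by
      rw [block_succ_at_zero, map_zero]
    rw [tsum_congr this, tsum_zero]
  refine ⟨hsummable, ?_, ?_, ?_⟩
  · -- continuity
    have huni := tendstoUniformlyOn_tsum hgeosum
      (fun q t ht => hterm q t ht) (s := Icc (0:ℝ) 1)
    exact huni.continuousOn (Filter.Frequently.of_forall fun N =>
      (continuous_finset_sum _ (fun q _ => para_term_cont v w q)).continuousOn)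
  · -- coefficient -1
    rw [hpara0, norm_zero, mul_zero]
    positivity
  · -- main coefficient bound
    intro p m hm2
    rcases eq_or_ne m 0 with rfl | hm
    · rcases eq_or_ne p 0 with rfl | hp
      · have h1 : para v w 1 = (v 0) (w 1 - w 0) := by
          show (∑' q:ℕ, (psum v q 1) (block w (q+1) 1)) = _
          rw [tsum_eq_single 0 (fun q hq => by
            rw [block_succ_at_one w q hq, map_zero])]
          rw [psum_zero_eq, block_one_at_one]
        have hco : coeff (para v w) 0 0 = (v 0) (w 1 - w 0) := by
          rw [coeff, if_pos rfl, if_pos rfl, h1, hpara0, sub_zero]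
        rw [hco]
        have hz : (2:ℝ)^(β*((0:ℕ):ℝ)) = 1 := by
          norm_num
        rw [hz, one_mul]
        have hb : ‖(v 0) (w 1 - w 0)‖ ≤ Mv * Kw := by
          calc ‖(v 0) (w 1 - w 0)‖ ≤ ‖v 0‖ * ‖w 1 - w 0‖ := ContinuousLinearMap.le_opNorm _ _
            _ ≤ Mv * Kw := by
                have h2 : ‖w 1 - w 0‖ ≤ Kw := by
                  have := hcoeff 0 0 (by norm_num)
                  rw [coeff_zero_zero] at this
                  simpa using this
                exact mul_le_mul (hv 0 ⟨le_rfl, zero_le_one⟩) h2 (norm_nonneg _) hMv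
        calc ‖(v 0) (w 1 - w 0)‖ ≤ Mv * Kw := hb
          _ ≤ C * Mv * Kw := by nlinarith [mul_nonneg hMv hKw]
      · rw [coeff, if_pos rfl, if_neg hp, norm_zero, mul_zero]
        positivity
    · -- m ≠ 0
      have hpt0 : pt0 p m ∈ Icc (0:ℝ) 1 :=
        ⟨pt0_nonneg p m hm, ((pt0_lt_pt1 p m).trans (pt1_lt_pt2 p m)).le.trans
          (pt2_le_one p m hm2)⟩
      have hpt1 : pt1 p m ∈ Icc (0:ℝ) 1 := pt1_mem p m hm hm2
      have hpt2 : pt2 p m ∈ Icc (0:ℝ) 1 :=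
        ⟨(pt0_nonneg p m hm).trans ((pt0_lt_pt1 p m).trans (pt1_lt_pt2 p m)).le,
          pt2_le_one p m hm2⟩
      have S0 := hsummable _ hpt0
      have S1 := hsummable _ hpt1
      have S2 := hsummable _ hpt2
      have hrepr : coeff (para v w) p m
          = ∑' q:ℕ, coeff (fun t => (psum v q t) (block w (q+1) t)) p m := by
        have e1 : coeff (para v w) p m = para v w (pt1 p m) + para v w (pt1 p m)
            - para v w (pt0 p m) - para v w (pt2 p m) := by
          rw [coeff, if_neg hm]
        rw [e1]
        show (∑' q:ℕ, (psum v q (pt1 p m)) (block w (q+1) (pt1 p m)))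
            + (∑' q:ℕ, (psum v q (pt1 p m)) (block w (q+1) (pt1 p m)))
            - (∑' q:ℕ, (psum v q (pt0 p m)) (block w (q+1) (pt0 p m)))
            - (∑' q:ℕ, (psum v q (pt2 p m)) (block w (q+1) (pt2 p m))) = _
        rw [← Summable.tsum_add S1 S1, ← Summable.tsum_sub (S1.add S1) S0,
          ← Summable.tsum_sub ((S1.add S1).sub S0) S2]
        exact tsum_congr fun q => by rw [coeff, if_neg hm]
      rw [hrepr]
      have hvanish : ∀ q ∉ Finset.range (p+1),
          coeff (fun t => (psum v q t) (block w (q+1) t)) p m = 0 := by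
        intro q hq
        exact coeff_para_term_zero v w p q m hm (by simpa [Finset.mem_range] using hq)
      rw [tsum_eq_sum hvanish]
      -- bound the finite sum
      have hX : ‖∑ q ∈ Finset.range (p+1),
          coeff (fun t => (psum v q t) (block w (q+1) t)) p m‖
          ≤ Mv*Kw*r^p + (2*Mv*Kw/4^p)*(s4^(p+1)/(s4-1)) := by
        refine (norm_sum_le _ _).trans ?_
        have hle : ∀ q ∈ Finset.range (p+1),
            ‖coeff (fun t => (psum v q t) (block w (q+1) t)) p m‖
            ≤ (if q = p then Mv * (Kw * r^q) else 0) + 2 * Mv * (Kw * r^q) * 4^q / 4^p := by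
          intro q hq
          exact coeff_term_bound v w Mv (Kw * r^q) hv (hKq0 q) p q m
            (fun m' hm' => hcoeff q m' hm') hm hm2 (Nat.lt_succ_iff.1 (Finset.mem_range.1 hq))
        refine (Finset.sum_le_sum hle).trans ?_
        rw [Finset.sum_add_distrib]
        have h1 : (∑ q ∈ Finset.range (p+1), if q = p then Mv * (Kw * r^q) else 0)
            = Mv*Kw*r^p := by
          rw [Finset.sum_ite_eq' (Finset.range (p+1)) p (fun q => Mv * (Kw * r^q)),
            if_pos (Finset.mem_range.2 (by omega))]
          ring
        have h2 : (∑ q ∈ Finset.range (p+1), 2 * Mv * (Kw * r^q) * 4^q / 4^p)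
            ≤ (2*Mv*Kw/4^p)*(s4^(p+1)/(s4-1)) := by
          have hterm : ∀ q, 2 * Mv * (Kw * r^q) * 4^q / 4^p
              = (2*Mv*Kw/4^p) * s4^q := by
            intro q
            rw [hs4def, mul_pow]
            ring
          rw [Finset.sum_congr rfl (fun q _ => hterm q), ← Finset.mul_sum]
          have hgeom : ∑ q ∈ Finset.range (p+1), s4^q ≤ s4^(p+1)/(s4-1) := by
            rw [geom_sum_eq (ne_of_gt hs1)]
            rw [div_le_div_iff₀ (by linarith) (by linarith)]
            nlinarith [pow_pos (by linarith : (0:ℝ) < s4) (p+1)]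
          have hcpos : (0:ℝ) ≤ 2*Mv*Kw/4^p := by positivity
          exact mul_le_mul_of_nonneg_left hgeom hcpos
        linarith
      have hone : (2:ℝ)^(β*(p:ℝ)) * r^p = 1 := by
        rw [← hrpow p, mul_inv_cancel₀ (ne_of_gt (hrppos _))]
      have key : (2:ℝ)^(β*(p:ℝ)) * (Mv*Kw*r^p + (2*Mv*Kw/4^p)*(s4^(p+1)/(s4-1)))
          = C * Mv * Kw := by
        have hs4p : s4^(p+1) = s4 * (4^p * r^p) := by
          rw [pow_succ, hs4def, mul_pow]
          ring
        have h4ne : (4:ℝ)^p ≠ 0 := by positivity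
        have hsne : s4 - 1 ≠ 0 := by linarith
        calc (2:ℝ)^(β*(p:ℝ)) * (Mv*Kw*r^p + (2*Mv*Kw/4^p)*(s4^(p+1)/(s4-1)))
            = ((2:ℝ)^(β*(p:ℝ)) * r^p) * (Mv*Kw) * (1 + 2*s4/(s4-1)) := by
              rw [hs4p]
              field_simp
          _ = C * Mv * Kw := by rw [hone, hCdef]; ring
      calc (2:ℝ)^(β*(p:ℝ)) * ‖∑ q ∈ Finset.range (p+1),
            coeff (fun t => (psum v q t) (block w (q+1) t)) p m‖
          ≤ (2:ℝ)^(β*(p:ℝ)) * (Mv*Kw*r^p + (2*Mv*Kw/4^p)*(s4^(p+1)/(s4-1))) :=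
            mul_le_mul_of_nonneg_left hX (le_of_lt (hrppos _))
        _ = C * Mv * Kw := key
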